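/- arXiv:2404.03272 — 2 statements merged into one kernel-verified Lean document; each statement's English description precedes it below -/
import Mathlib

section
/- For any β > 0, σ ≥ 0, and x ∈ ℝ, E_{z∼N(0,1/(2π))}[ T_γ^β( x/√(1+σ²) + σ z/√(1+σ²) ) ] = T_γ^s(x), where s = √((1+β²)(1+σ²) − 1). -/
open Real MeasureTheory

/-- Gaussian mass of the lattice `(1/γ)ℤ`. -/
noncomputable def latticeMass (γ : ℝ) : ℝ :=
  ∑' k : ℤ, Real.exp (-Real.pi * ((k : ℝ) / γ) ^ 2)

/-- Likelihood ratio `T_γ^β` of the β-smoothed discrete Gaussian on `(1/γ)ℤ`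
with respect to `N(0, 1/(2π))`. -/
noncomputable def pancakeLR (γ β z : ℝ) : ℝ :=
  (Real.sqrt (1 + β ^ 2) / (β * latticeMass γ)) *
    ∑' k : ℤ, Real.exp (-Real.pi * (z - Real.sqrt (1 + β ^ 2) * (k : ℝ) / γ) ^ 2 / β ^ 2)

/-- Summability of a Gaussian over shifted naturals. -/
lemma summable_gauss_nat (a t : ℝ) (ha : 0 < a) :
    Summable fun n : ℕ => Real.exp (-(a * ((n : ℝ) + t) ^ 2)) := by
  have h : ∀ n : ℕ, Real.exp (-(a * ((n : ℝ) + t) ^ 2)) ≤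
      Real.exp (a * ((2*t-1)^2/4 - t^2)) * Real.exp (-a) ^ n := by
    intro n
    rw [← Real.exp_nat_mul, ← Real.exp_add, Real.exp_le_exp]
    nlinarith [sq_nonneg ((n : ℝ) + (2*t-1)/2), ha.le, sq_nonneg ((n:ℝ)+t)]
  refine Summable.of_nonneg_of_le (fun n => (Real.exp_pos _).le) h ?_
  exact (summable_geometric_of_lt_one (Real.exp_pos _).le
    (Real.exp_lt_one_iff.mpr (by linarith))).mul_left _

/-- Summability of a Gaussian over a shifted lattice. -/
lemma summable_gauss_int (a t : ℝ) (ha : 0 < a) :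
    Summable fun k : ℤ => Real.exp (-(a * ((k : ℝ) + t) ^ 2)) := by
  refine Summable.of_nat_of_neg ?_ ?_
  · simpa using summable_gauss_nat a t ha
  · have := summable_gauss_nat a (-t) ha
    refine this.congr fun n => ?_
    push_cast
    ring_nf

/-- Gaussian smoothing identity for the likelihood ratios: averaging `T_γ^β` over
`z ∼ N(0,1/(2π))` (density `exp(-πz²)`) yields `T_γ^s` with
`s = √((1+β²)(1+σ²) − 1)`. -/
theorem pancakeLR_smoothing (γ β σ x : ℝ) (hγ : 0 < γ) (hβ : 0 < β) (hσ : 0 ≤ σ) :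
    ∫ z : ℝ, Real.exp (-Real.pi * z ^ 2) *
        pancakeLR γ β (x / Real.sqrt (1 + σ ^ 2) + σ * z / Real.sqrt (1 + σ ^ 2))
      = pancakeLR γ (Real.sqrt ((1 + β ^ 2) * (1 + σ ^ 2) - 1)) x := by
  have h1σ : (0:ℝ) < 1 + σ ^ 2 := by positivity
  have h1β : (0:ℝ) < 1 + β ^ 2 := by positivity
  have hβ2 : (0:ℝ) < β ^ 2 := pow_pos hβ 2
  have hDpos : (0:ℝ) < β ^ 2 + σ ^ 2 + β ^ 2 * σ ^ 2 := by positivity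
  simp only [pancakeLR]
  set L := latticeMass γ with hLdef
  -- positivity of the lattice mass
  have hLsum : Summable fun k : ℤ => Real.exp (-Real.pi * ((k : ℝ) / γ) ^ 2) := by
    refine (summable_gauss_int (Real.pi / γ ^ 2) 0 (by positivity)).congr fun k => ?_
    congr 1
    field_simp
    ring
  have hL : 0 < L := by
    rw [hLdef, latticeMass]
    exact Summable.tsum_pos hLsum (fun k => (Real.exp_pos _).le) 0 (Real.exp_pos _)
  set A := Real.sqrt (1 + σ ^ 2) with hAdef
  set B := Real.sqrt (1 + β ^ 2) with hBdef
  set s := Real.sqrt ((1 + β ^ 2) * (1 + σ ^ 2) - 1) with hsdef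
  have hA : 0 < A := Real.sqrt_pos.mpr h1σ
  have hB : 0 < B := Real.sqrt_pos.mpr h1β
  have hA2 : A ^ 2 = 1 + σ ^ 2 := Real.sq_sqrt h1σ.le
  have hB2 : B ^ 2 = 1 + β ^ 2 := Real.sq_sqrt h1β.le
  have hDeq : (1 + β ^ 2) * (1 + σ ^ 2) - 1 = β ^ 2 + σ ^ 2 + β ^ 2 * σ ^ 2 := by ring
  have hs2 : s ^ 2 = β ^ 2 + σ ^ 2 + β ^ 2 * σ ^ 2 := by
    rw [hsdef, Real.sq_sqrt (by rw [hDeq]; exact hDpos.le), hDeq]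
  have hs : 0 < s := Real.sqrt_pos.mpr (by rw [hDeq]; exact hDpos)
  have hP2 : (A * B) ^ 2 = (1 + β ^ 2) * (1 + σ ^ 2) := by rw [mul_pow, hA2, hB2]; ring
  have hsqrt1s : Real.sqrt (1 + s ^ 2) = A * B := by
    rw [hs2, show 1 + (β ^ 2 + σ ^ 2 + β ^ 2 * σ ^ 2) = (A * B) ^ 2 by rw [hP2]; ring,
      Real.sqrt_sq (mul_pos hA hB).le]
  simp only [hsqrt1s]
  simp only [hs2]
  -- rewrite exponent on LHS to isolate z
  have hden : ∀ (k : ℤ) (z : ℝ),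
      -Real.pi * (x / A + σ * z / A - B * (k : ℝ) / γ) ^ 2 / β ^ 2
        = -Real.pi * (x - A * B * (k : ℝ) / γ + σ * z) ^ 2 / ((1 + σ ^ 2) * β ^ 2) := by
    intro k z
    rw [← hA2]
    field_simp
    ring
  simp only [hden]
  -- abbreviations for the resulting Gaussians
  set D : ℝ := β ^ 2 + σ ^ 2 + β ^ 2 * σ ^ 2 with hDdef
  set c : ℝ := Real.pi * D / ((1 + σ ^ 2) * β ^ 2) with hcdef
  have hc : 0 < c := by rw [hcdef]; positivity
  set e : ℤ → ℝ := fun k => Real.exp (-Real.pi * (x - A * B * (k : ℝ) / γ) ^ 2 / D) with hedef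
  set q : ℤ → ℝ := fun k => σ * (x - A * B * (k : ℝ) / γ) / D with hqdef
  have hkey : ∀ (k : ℤ) (z : ℝ),
      Real.exp (-Real.pi * z ^ 2) *
          Real.exp (-Real.pi * (x - A * B * (k : ℝ) / γ + σ * z) ^ 2 / ((1 + σ ^ 2) * β ^ 2))
        = e k * Real.exp (-c * (z + q k) ^ 2) := by
    intro k z
    rw [hedef, hcdef, hqdef, ← Real.exp_add, ← Real.exp_add]
    congr 1
    have hDne : D ≠ 0 := hDpos.ne'
    field_simp
    ring
  -- summability of the Gaussian on the lattice
  have hesum : Summable e := by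
    have hABγ : (0:ℝ) < A * B / γ := by positivity
    refine (summable_gauss_int (Real.pi * (A * B / γ) ^ 2 / D) (-(x * γ / (A * B)))
      (by positivity)).congr fun k => ?_
    rw [hedef]
    congr 1
    have : A * B ≠ 0 := (mul_pos hA hB).ne'
    field_simp
    ring
  -- per-term integrability
  have hint : ∀ k : ℤ, Integrable (fun z : ℝ => e k * Real.exp (-c * (z + q k) ^ 2)) := by
    intro k
    exact ((integrable_exp_neg_mul_sq hc).comp_add_right (q k)).const_mul (e k)
  -- per-term integral
  have hIval : ∀ k : ℤ, (∫ z : ℝ, e k * Real.exp (-c * (z + q k) ^ 2))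
      = e k * Real.sqrt (Real.pi / c) := by
    intro k
    rw [MeasureTheory.integral_const_mul]
    congr 1
    rw [integral_add_right_eq_self (fun z : ℝ => Real.exp (-c * z ^ 2)) (q k)]
    exact integral_gaussian c
  -- rearrange the integrand and swap integral and sum
  have hnorm : Summable fun k : ℤ => ∫ z : ℝ, ‖e k * Real.exp (-c * (z + q k) ^ 2)‖ := by
    refine (hesum.mul_right (Real.sqrt (Real.pi / c))).congr fun k => ?_
    have h1 : (∫ z : ℝ, ‖e k * Real.exp (-c * (z + q k) ^ 2)‖)
        = ∫ z : ℝ, e k * Real.exp (-c * (z + q k) ^ 2) := by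
      congr 1
      ext z
      rw [Real.norm_of_nonneg]
      simp only [hedef]
      positivity
    rw [h1, hIval k]
  have hswap : (∫ z : ℝ, Real.exp (-Real.pi * z ^ 2) *
        ∑' k : ℤ, Real.exp (-Real.pi * (x - A * B * (k : ℝ) / γ + σ * z) ^ 2 /
          ((1 + σ ^ 2) * β ^ 2)))
      = ∑' k : ℤ, (∫ z : ℝ, e k * Real.exp (-c * (z + q k) ^ 2)) := by
    have hre : (∫ z : ℝ, Real.exp (-Real.pi * z ^ 2) *
        ∑' k : ℤ, Real.exp (-Real.pi * (x - A * B * (k : ℝ) / γ + σ * z) ^ 2 /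
          ((1 + σ ^ 2) * β ^ 2)))
        = ∫ z : ℝ, ∑' k : ℤ, e k * Real.exp (-c * (z + q k) ^ 2) := by
      congr 1
      ext z
      rw [← tsum_mul_left]
      exact tsum_congr fun k => hkey k z
    rw [hre]
    exact (MeasureTheory.integral_tsum_of_summable_integral_norm hint hnorm).symm
  -- assemble
  calc
    ∫ z : ℝ, Real.exp (-Real.pi * z ^ 2) * (B / (β * L) *
        ∑' k : ℤ, Real.exp (-Real.pi * (x - A * B * (k : ℝ) / γ + σ * z) ^ 2 /
          ((1 + σ ^ 2) * β ^ 2)))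
        = B / (β * L) * ∫ z : ℝ, Real.exp (-Real.pi * z ^ 2) *
            ∑' k : ℤ, Real.exp (-Real.pi * (x - A * B * (k : ℝ) / γ + σ * z) ^ 2 /
              ((1 + σ ^ 2) * β ^ 2)) := by
          rw [← MeasureTheory.integral_const_mul]
          congr 1
          ext z
          ring
    _ = B / (β * L) * ∑' k : ℤ, (e k * Real.sqrt (Real.pi / c)) := by
          rw [hswap]
          congr 1
          exact tsum_congr hIval
    _ = A * B / (s * L) * ∑' k : ℤ, e k := by
          rw [tsum_mul_right]
          have hπc1 : Real.pi / c = (1 + σ ^ 2) * β ^ 2 / D := by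
            rw [hcdef]
            field_simp
          have hπc2 : (1 + σ ^ 2) * β ^ 2 / D = (A * β / s) ^ 2 := by
            rw [div_pow, mul_pow, hA2, hs2]
          rw [hπc1, hπc2, Real.sqrt_sq (by positivity)]
          field_simp
end

section
/- Pointwise maximum of the smoothed likelihood ratio: for any γ > 0 and β > 0, T_γ^β(z) ≤ T_γ^β(0) ≤ √(1+β²)/β for all z ∈ ℝ. In particular, if β² = 1/(πγ²) and γ > 1, then T_γ^β(z) ≤ γ√(2π) for all z. -/
open Real

lemma summable_gauss_shift (a t : ℝ) (ha : 0 < a) :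
    Summable fun n : ℤ => Real.exp (-π * a * ((n : ℝ) - t) ^ 2) := by
  have h := summable_pow_mul_jacobiTheta₂_term_bound (a * |t|) ha 0
  simp only [pow_zero, one_mul] at h
  refine (h.mul_left (Real.exp (-π * a * t ^ 2))).of_nonneg_of_le
    (fun n => (Real.exp_pos _).le) (fun n => ?_)
  rw [← Real.exp_add]
  apply Real.exp_le_exp.mpr
  have h1 : (n : ℝ) * t ≤ |(n : ℝ)| * |t| := (le_abs_self _).trans (abs_mul _ _).le
  have h2 : ((|n| : ℤ) : ℝ) = |(n : ℝ)| := by push_cast; ring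
  rw [h2]
  nlinarith [mul_le_mul_of_nonneg_left h1 (mul_pos pi_pos ha).le]

lemma gauss_shift_le (a t : ℝ) (ha : 0 < a) :
    ∑' n : ℤ, Real.exp (-π * a * ((n : ℝ) - t) ^ 2) ≤
      ∑' n : ℤ, Real.exp (-π * a * (n : ℝ) ^ 2) := by
  have ha' : 0 < (a : ℂ).re := by simpa using ha
  have haC : (a : ℂ) ≠ 0 := by exact_mod_cast ha.ne'
  have step1 : ((∑' n : ℤ, Real.exp (-π * a * ((n : ℝ) - t) ^ 2) : ℝ) : ℂ)
      = Complex.exp (-(π : ℂ) * a * t ^ 2) *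
        ∑' n : ℤ, Complex.exp (-(π : ℂ) * a * (n : ℂ) ^ 2 + 2 * π * (a * t) * (n : ℂ)) := by
    rw [Complex.ofReal_tsum, ← tsum_mul_left]
    refine tsum_congr fun n => ?_
    rw [Complex.ofReal_exp, ← Complex.exp_add]
    congr 1
    push_cast
    ring
  have step2 := Complex.tsum_exp_neg_quadratic ha' ((a : ℂ) * t)
  have step3 : (∑' n : ℤ, Complex.exp (-(π : ℂ) / a * ((n : ℂ) + Complex.I * ((a : ℂ) * t)) ^ 2))
      = Complex.exp ((π : ℂ) * a * t ^ 2) *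
        ∑' n : ℤ, Complex.exp (-(π : ℂ) / a * (n : ℂ) ^ 2 - 2 * π * Complex.I * t * (n : ℂ)) := by
    rw [← tsum_mul_left]
    refine tsum_congr fun n => ?_
    rw [← Complex.exp_add]
    congr 1
    field_simp
    ring_nf
    rw [Complex.I_sq]
    ring
  have key : ((∑' n : ℤ, Real.exp (-π * a * ((n : ℝ) - t) ^ 2) : ℝ) : ℂ)
      = (1 / (a : ℂ) ^ (1 / 2 : ℂ)) *
        ∑' n : ℤ, Complex.exp (-(π : ℂ) / a * (n : ℂ) ^ 2 - 2 * π * Complex.I * t * (n : ℂ)) := by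
    rw [step1, step2, step3,
      show ∀ u v w x : ℂ, u * (v * (w * x)) = (u * w) * (v * x) from fun _ _ _ _ => by ring,
      ← Complex.exp_add]
    simp
  have hnorm : ∀ n : ℤ, ‖Complex.exp (-(π : ℂ) / a * (n : ℂ) ^ 2 - 2 * π * Complex.I * t * n)‖
      = Real.exp (-π / a * (n : ℝ) ^ 2) := by
    intro n
    have he : -(π : ℂ) / a * (n : ℂ) ^ 2 - 2 * π * Complex.I * t * n
        = ((-π / a * (n : ℝ) ^ 2 : ℝ) : ℂ) + ((-2 * π * t * n : ℝ) : ℂ) * Complex.I := by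
      push_cast; ring
    rw [Complex.norm_exp, he, Complex.add_re, Complex.ofReal_re,
      Complex.mul_re, Complex.ofReal_re, Complex.ofReal_im, Complex.I_re, Complex.I_im]
    norm_num
  have hsumnorm : Summable fun n : ℤ => Real.exp (-π / a * (n : ℝ) ^ 2) := by
    refine (summable_gauss_shift (1 / a) 0 (by positivity)).congr fun n => ?_
    rw [sub_zero]
    congr 1
    field_simp
  have hpos : 0 ≤ a ^ (1 / 2 : ℝ) := Real.rpow_nonneg ha.le _
  have hnormc : ‖(1 / (a : ℂ) ^ (1 / 2 : ℂ))‖ = 1 / a ^ (1 / 2 : ℝ) := by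
    have : ((a ^ (1 / 2 : ℝ) : ℝ) : ℂ) = (a : ℂ) ^ (1 / 2 : ℂ) := by
      rw [Complex.ofReal_cpow ha.le]
      norm_num
    rw [norm_div, ← this, norm_one, Complex.norm_real, Real.norm_of_nonneg hpos]
  have hLHS : (0 : ℝ) ≤ ∑' n : ℤ, Real.exp (-π * a * ((n : ℝ) - t) ^ 2) :=
    tsum_nonneg fun n => (Real.exp_pos _).le
  calc ∑' n : ℤ, Real.exp (-π * a * ((n : ℝ) - t) ^ 2)
      = ‖((∑' n : ℤ, Real.exp (-π * a * ((n : ℝ) - t) ^ 2) : ℝ) : ℂ)‖ := by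
        rw [Complex.norm_real, Real.norm_of_nonneg hLHS]
    _ = ‖(1 / (a : ℂ) ^ (1 / 2 : ℂ))‖ *
        ‖∑' n : ℤ, Complex.exp (-(π : ℂ) / a * (n : ℂ) ^ 2 - 2 * π * Complex.I * t * (n : ℂ))‖ := by
        rw [key, norm_mul]
    _ ≤ (1 / a ^ (1 / 2 : ℝ)) * ∑' n : ℤ, Real.exp (-π / a * (n : ℝ) ^ 2) := by
        rw [hnormc]
        refine mul_le_mul_of_nonneg_left ?_ (by positivity)
        refine le_trans (norm_tsum_le_tsum_norm ?_) ?_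
        · exact hsumnorm.congr fun n => (hnorm n).symm
        · exact le_of_eq (tsum_congr hnorm)
    _ = ∑' n : ℤ, Real.exp (-π * a * (n : ℝ) ^ 2) := (Real.tsum_exp_neg_mul_int_sq ha).symm

/-- Pointwise maximum of the smoothed likelihood ratio:
`T_γ^β(z) ≤ T_γ^β(0) ≤ √(1+β²)/β`; in particular, if `β² = 1/(πγ²)` and `γ > 1`,
then `T_γ^β(z) ≤ γ√(2π)` for all `z`. -/
theorem pancakeLR_max (γ β : ℝ) (hγ : 0 < γ) (hβ : 0 < β) :
    (∀ z : ℝ, pancakeLR γ β z ≤ pancakeLR γ β 0) ∧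
    pancakeLR γ β 0 ≤ Real.sqrt (1 + β ^ 2) / β ∧
    (β ^ 2 = 1 / (Real.pi * γ ^ 2) → 1 < γ →
      ∀ z : ℝ, pancakeLR γ β z ≤ γ * Real.sqrt (2 * Real.pi)) := by
  have hs : 0 < Real.sqrt (1 + β ^ 2) := Real.sqrt_pos.mpr (by positivity)
  have hs2 : Real.sqrt (1 + β ^ 2) ^ 2 = 1 + β ^ 2 := Real.sq_sqrt (by positivity)
  set s := Real.sqrt (1 + β ^ 2) with hsdef
  set a : ℝ := (1 + β ^ 2) / (γ ^ 2 * β ^ 2) with hadef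
  have ha : 0 < a := by positivity
  have hrw : ∀ z : ℝ, (∑' k : ℤ, Real.exp (-π * (z - s * (k : ℝ) / γ) ^ 2 / β ^ 2))
      = ∑' k : ℤ, Real.exp (-π * a * ((k : ℝ) - z * γ / s) ^ 2) := by
    intro z
    refine tsum_congr fun k => ?_
    congr 1
    rw [hadef, ← hs2]
    field_simp
    ring
  have hLM : latticeMass γ = ∑' k : ℤ, Real.exp (-π * (1 / γ ^ 2) * (k : ℝ) ^ 2) := by
    refine tsum_congr fun k => ?_
    congr 1
    field_simp
  have hsummand : ∀ b : ℝ, 0 < b → Summable fun k : ℤ => Real.exp (-π * b * (k : ℝ) ^ 2) := by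
    intro b hb
    exact (summable_gauss_shift b 0 hb).congr fun k => by rw [sub_zero]
  have hLpos : 0 < latticeMass γ := by
    rw [hLM]
    exact Summable.tsum_pos (hsummand _ (by positivity)) (fun k => (Real.exp_pos _).le) 0 (Real.exp_pos _)
  have hP : ∀ z : ℝ, pancakeLR γ β z
      = (s / (β * latticeMass γ)) * ∑' k : ℤ, Real.exp (-π * a * ((k : ℝ) - z * γ / s) ^ 2) := by
    intro z
    rw [pancakeLR, ← hrw z]
  have hP0 : pancakeLR γ β 0
      = (s / (β * latticeMass γ)) * ∑' k : ℤ, Real.exp (-π * a * (k : ℝ) ^ 2) := by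
    rw [hP 0]
    congr 1
    refine tsum_congr fun k => ?_
    rw [zero_mul, zero_div, sub_zero]
  have part1 : ∀ z : ℝ, pancakeLR γ β z ≤ pancakeLR γ β 0 := by
    intro z
    rw [hP z, hP0]
    exact mul_le_mul_of_nonneg_left (gauss_shift_le a (z * γ / s) ha) (by positivity)
  have hsum_le : (∑' k : ℤ, Real.exp (-π * a * (k : ℝ) ^ 2)) ≤ latticeMass γ := by
    rw [hLM]
    refine Summable.tsum_le_tsum (fun k => ?_) (hsummand a ha) (hsummand _ (by positivity))
    apply Real.exp_le_exp.mpr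
    have haa : 1 / γ ^ 2 ≤ a := by
      have : a = 1 / γ ^ 2 + 1 / (γ ^ 2 * β ^ 2) := by rw [hadef]; field_simp; ring
      rw [this]
      have : 0 < 1 / (γ ^ 2 * β ^ 2) := by positivity
      linarith
    nlinarith [mul_le_mul_of_nonneg_right haa (sq_nonneg (k : ℝ)), pi_pos]
  have part2 : pancakeLR γ β 0 ≤ s / β := by
    rw [hP0, div_mul_eq_mul_div, div_le_div_iff₀ (by positivity) hβ]
    nlinarith [mul_le_mul_of_nonneg_left hsum_le (mul_pos hs hβ).le]
  refine ⟨part1, part2, fun h2 h1 z => ?_⟩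
  have hA : (1 + β ^ 2) / β ^ 2 ≤ 2 * π * γ ^ 2 := by
    have he : (1 + β ^ 2) / β ^ 2 = 1 / β ^ 2 + 1 := by field_simp
    have h1β : 1 / β ^ 2 = π * γ ^ 2 := by
      rw [h2]
      field_simp
    rw [he, h1β]
    nlinarith [pi_gt_three, h1, sq_nonneg (γ - 1)]
  have hsb : s / β = Real.sqrt ((1 + β ^ 2) / β ^ 2) := by
    rw [Real.sqrt_div (by positivity), Real.sqrt_sq hβ.le]
  have hgb : γ * Real.sqrt (2 * π) = Real.sqrt (2 * π * γ ^ 2) := by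
    rw [show 2 * π * γ ^ 2 = γ ^ 2 * (2 * π) by ring, Real.sqrt_mul (sq_nonneg γ),
      Real.sqrt_sq hγ.le]
  calc pancakeLR γ β z ≤ pancakeLR γ β 0 := part1 z
    _ ≤ s / β := part2
    _ ≤ γ * Real.sqrt (2 * π) := by
        rw [hsb, hgb]
        exact Real.sqrt_le_sqrt hA
end
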